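/- Let f ∈ ℝ[T] be a univariate polynomial of degree d with f(t) ≥ 0 for all t ∈ [−1, 1]. Then there exist sums of squares of polynomials s₀, s₁, s₂ ∈ ℝ[T] such that f = s₀ + s₁·(1−T) + s₂·(1+T), with deg s₀ ≤ d+1, deg(s₁·(1−T)) ≤ d+1, and deg(s₂·(1+T)) ≤ d+1. -/

import Mathlib

open Polynomial Set

/-- A univariate real polynomial that is a sum of squares. -/
def IsSOS1 (p : Polynomial ℝ) : Prop :=
  ∃ (k : ℕ) (q : Fin k → Polynomial ℝ), p = ∑ i, (q i) ^ 2

section Auxiliary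

open Filter Topology

lemma isSOS1_zero : IsSOS1 0 := ⟨0, fun _ => 0, by simp⟩

lemma isSOS1_C {c : ℝ} (hc : 0 ≤ c) : IsSOS1 (C c) :=
  ⟨1, fun _ => C (Real.sqrt c), by rw [Fin.sum_univ_one, ← C_pow, Real.sq_sqrt hc]⟩

lemma IsSOS1.add {p q : Polynomial ℝ} (hp : IsSOS1 p) (hq : IsSOS1 q) : IsSOS1 (p + q) := by
  obtain ⟨k, u, rfl⟩ := hp
  obtain ⟨l, v, rfl⟩ := hq
  exact ⟨k + l, Fin.append u v, by
    rw [Fin.sum_univ_add]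
    simp [Fin.append_left, Fin.append_right]⟩

lemma IsSOS1.mul_sq {p : Polynomial ℝ} (g : Polynomial ℝ) (hp : IsSOS1 p) :
    IsSOS1 (g ^ 2 * p) := by
  obtain ⟨k, u, rfl⟩ := hp
  exact ⟨k, fun i => g * u i, by rw [Finset.mul_sum]; simp [mul_pow]⟩

lemma IsSOS1.C_mul {p : Polynomial ℝ} {c : ℝ} (hc : 0 ≤ c) (hp : IsSOS1 p) :
    IsSOS1 (C c * p) := by
  have h : (C (Real.sqrt c)) ^ 2 = C c := by rw [← C_pow, Real.sq_sqrt hc]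
  rw [← h]; exact hp.mul_sq _

lemma nonneg_extend {h : Polynomial ℝ} {r : ℝ} (hr : r ∈ Icc (-1:ℝ) 1)
    (hh : ∀ t ∈ Icc (-1:ℝ) 1, t ≠ r → 0 ≤ h.eval t) :
    ∀ t ∈ Icc (-1:ℝ) 1, 0 ≤ h.eval t := by
  intro t ht
  rcases eq_or_ne t r with rfl | hne
  · rcases lt_or_eq_of_le ht.2 with h1 | h1
    · have hne : (𝓝[Ioc t 1] t).NeBot := by
        rw [nhdsWithin_Ioc_eq_nhdsGT h1]
        infer_instance
      have htend : Tendsto (fun x => h.eval x) (𝓝[Ioc t 1] t) (𝓝 (h.eval t)) :=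
        (h.continuousAt).continuousWithinAt.tendsto
      refine ge_of_tendsto htend ?_
      filter_upwards [self_mem_nhdsWithin] with x hx
      exact hh x ⟨le_trans ht.1 (le_of_lt hx.1), hx.2⟩ (ne_of_gt hx.1)
    · have h1' : (-1:ℝ) < t := by rw [h1]; norm_num
      have hne : (𝓝[Ico (-1:ℝ) t] t).NeBot := by
        rw [nhdsWithin_Ico_eq_nhdsLT h1']
        infer_instance
      have htend : Tendsto (fun x => h.eval x) (𝓝[Ico (-1:ℝ) t] t) (𝓝 (h.eval t)) :=
        (h.continuousAt).continuousWithinAt.tendsto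
      refine ge_of_tendsto htend ?_
      filter_upwards [self_mem_nhdsWithin] with x hx
      exact hh x ⟨hx.1, le_trans (le_of_lt hx.2) ht.2⟩ (ne_of_lt hx.2)
  · exact hh t ht hne

lemma sq_dvd_of_double_root {g : Polynomial ℝ} {r : ℝ} (h0 : g.eval r = 0)
    (h1 : g.derivative.eval r = 0) : (X - C r) ^ 2 ∣ g := by
  have hd : (X - C r) ∣ g := dvd_iff_isRoot.mpr h0
  obtain ⟨k, rfl⟩ := hd
  have : k.eval r = 0 := by
    have hder := Polynomial.derivative_mul (f := X - C r) (g := k)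
    rw [hder] at h1
    simpa using h1
  obtain ⟨m, rfl⟩ := dvd_iff_isRoot.mpr this
  exact ⟨m, by ring⟩

/-- Four-term certificate with all product degrees bounded by `n`. -/
def Rep4 (n : ℕ) (f : Polynomial ℝ) : Prop :=
  ∃ s₀ s₁ s₂ s₃ : Polynomial ℝ,
    IsSOS1 s₀ ∧ IsSOS1 s₁ ∧ IsSOS1 s₂ ∧ IsSOS1 s₃ ∧
    s₀.natDegree ≤ n ∧ (s₁ * (1 - X)).natDegree ≤ n ∧
    (s₂ * (1 + X)).natDegree ≤ n ∧ (s₃ * ((1 - X) * (1 + X))).natDegree ≤ n ∧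
    f = s₀ + s₁ * (1 - X) + s₂ * (1 + X) + s₃ * ((1 - X) * (1 + X))

lemma deg_oneSubX : (1 - X : Polynomial ℝ).natDegree = 1 := by compute_degree!
lemma deg_onePlusX : (1 + X : Polynomial ℝ).natDegree = 1 := by compute_degree!

lemma oneSubX_ne : (1 - X : Polynomial ℝ) ≠ 0 := fun hz => by
  simpa [hz] using deg_oneSubX

lemma onePlusX_ne : (1 + X : Polynomial ℝ) ≠ 0 := fun hz => by
  simpa [hz] using deg_onePlusX

lemma rep4_mono {m n : ℕ} {f : Polynomial ℝ} (hmn : m ≤ n) (h : Rep4 m f) : Rep4 n f := by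
  obtain ⟨s₀, s₁, s₂, s₃, h0, h1, h2, h3, d0, d1, d2, d3, e⟩ := h
  exact ⟨s₀, s₁, s₂, s₃, h0, h1, h2, h3, d0.trans hmn, d1.trans hmn, d2.trans hmn,
    d3.trans hmn, e⟩

lemma rep4_const {c : ℝ} (hc : 0 ≤ c) (n : ℕ) : Rep4 n (C c) :=
  ⟨C c, 0, 0, 0, isSOS1_C hc, isSOS1_zero, isSOS1_zero, isSOS1_zero,
    by simp, by simp, by simp, by simp, by simp⟩

lemma rep4_add_C {n : ℕ} {f : Polynomial ℝ} {c : ℝ} (hc : 0 ≤ c) (h : Rep4 n f) :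
    Rep4 n (f + C c) := by
  obtain ⟨s₀, s₁, s₂, s₃, h0, h1, h2, h3, d0, d1, d2, d3, e⟩ := h
  refine ⟨s₀ + C c, s₁, s₂, s₃, h0.add (isSOS1_C hc), h1, h2, h3, ?_, d1, d2, d3,
    by rw [e]; ring⟩
  exact le_trans (natDegree_add_le _ _) (by simp [d0])

lemma rep4_mul_oneSubX {n : ℕ} {h : Polynomial ℝ} (hr : Rep4 n h) :
    Rep4 (n + 1) ((1 - X) * h) := by
  obtain ⟨t₀, t₁, t₂, t₃, h0, h1, h2, h3, d0, d1, d2, d3, e⟩ := hr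
  refine ⟨(1 - X) ^ 2 * t₁, t₀, (1 - X) ^ 2 * t₃, t₂,
    h1.mul_sq _, h0, h3.mul_sq _, h2, ?_, ?_, ?_, ?_, by rw [e]; ring⟩
  · have : (1 - X : Polynomial ℝ) ^ 2 * t₁ = (t₁ * (1 - X)) * (1 - X) := by ring
    rw [this]
    exact le_trans (natDegree_mul_le) (by rw [deg_oneSubX]; omega)
  · exact le_trans (natDegree_mul_le) (by rw [deg_oneSubX]; omega)
  · have : (1 - X : Polynomial ℝ) ^ 2 * t₃ * (1 + X) = (t₃ * ((1 - X) * (1 + X))) * (1 - X) := by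
      ring
    rw [this]
    exact le_trans (natDegree_mul_le) (by rw [deg_oneSubX]; omega)
  · have : t₂ * ((1 - X : Polynomial ℝ) * (1 + X)) = (t₂ * (1 + X)) * (1 - X) := by ring
    rw [this]
    exact le_trans (natDegree_mul_le) (by rw [deg_oneSubX]; omega)

lemma rep4_mul_onePlusX {n : ℕ} {h : Polynomial ℝ} (hr : Rep4 n h) :
    Rep4 (n + 1) ((1 + X) * h) := by
  obtain ⟨t₀, t₁, t₂, t₃, h0, h1, h2, h3, d0, d1, d2, d3, e⟩ := hr
  refine ⟨(1 + X) ^ 2 * t₂, (1 + X) ^ 2 * t₃, t₀, t₁,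
    h2.mul_sq _, h3.mul_sq _, h0, h1, ?_, ?_, ?_, ?_, by rw [e]; ring⟩
  · have : (1 + X : Polynomial ℝ) ^ 2 * t₂ = (t₂ * (1 + X)) * (1 + X) := by ring
    rw [this]
    exact le_trans (natDegree_mul_le) (by rw [deg_onePlusX]; omega)
  · have : (1 + X : Polynomial ℝ) ^ 2 * t₃ * (1 - X) = (t₃ * ((1 - X) * (1 + X))) * (1 + X) := by
      ring
    rw [this]
    exact le_trans (natDegree_mul_le) (by rw [deg_onePlusX]; omega)
  · exact le_trans (natDegree_mul_le) (by rw [deg_onePlusX]; omega)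
  · have : t₁ * ((1 - X : Polynomial ℝ) * (1 + X)) = (t₁ * (1 - X)) * (1 + X) := by ring
    rw [this]
    exact le_trans (natDegree_mul_le) (by rw [deg_onePlusX]; omega)

lemma rep4_mul_sq {n : ℕ} {h : Polynomial ℝ} (g : Polynomial ℝ) (hg : g.natDegree ≤ 1)
    (hr : Rep4 n h) : Rep4 (n + 2) (g ^ 2 * h) := by
  obtain ⟨t₀, t₁, t₂, t₃, h0, h1, h2, h3, d0, d1, d2, d3, e⟩ := hr
  have hg2 : (g ^ 2).natDegree ≤ 2 := le_trans (natDegree_pow_le) (by omega)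
  refine ⟨g ^ 2 * t₀, g ^ 2 * t₁, g ^ 2 * t₂, g ^ 2 * t₃,
    h0.mul_sq _, h1.mul_sq _, h2.mul_sq _, h3.mul_sq _, ?_, ?_, ?_, ?_, by rw [e]; ring⟩
  · exact le_trans (natDegree_mul_le) (by omega)
  · have : g ^ 2 * t₁ * (1 - X) = g ^ 2 * (t₁ * (1 - X)) := by ring
    rw [this]
    exact le_trans (natDegree_mul_le) (by omega)
  · have : g ^ 2 * t₂ * (1 + X) = g ^ 2 * (t₂ * (1 + X)) := by ring
    rw [this]
    exact le_trans (natDegree_mul_le) (by omega)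
  · have : g ^ 2 * t₃ * ((1 - X) * (1 + X)) = g ^ 2 * (t₃ * ((1 - X) * (1 + X))) := by ring
    rw [this]
    exact le_trans (natDegree_mul_le) (by omega)

lemma rep4_main : ∀ (n : ℕ) (f : Polynomial ℝ), f.natDegree ≤ n →
    (∀ t ∈ Icc (-1:ℝ) 1, 0 ≤ f.eval t) → Rep4 n f := by
  intro n
  induction n using Nat.strong_induction_on with
  | _ n ih =>
    intro f hdeg hf
    obtain ⟨r, hrI, hrmin⟩ := isCompact_Icc.exists_isMinOn
      (nonempty_Icc.mpr (by norm_num : (-1:ℝ) ≤ 1)) (f.continuous.continuousOn)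
    set m : ℝ := f.eval r with hm
    have hm0 : 0 ≤ m := hf r hrI
    set g : Polynomial ℝ := f - C m with hgdef
    have hfg : f = g + C m := by rw [hgdef]; ring
    have hgnn : ∀ t ∈ Icc (-1:ℝ) 1, 0 ≤ g.eval t := by
      intro t ht
      have h1 := isMinOn_iff.mp hrmin t ht
      simp only [hgdef, eval_sub, eval_C, sub_nonneg]
      exact h1
    have hgr : g.eval r = 0 := by simp [hgdef, hm]
    have hgdeg : g.natDegree ≤ n :=
      le_trans (natDegree_sub_le _ _) (by simp [hdeg])
    rcases eq_or_ne g 0 with hg0 | hg0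
    · rw [hfg, hg0, zero_add]; exact rep4_const hm0 n
    rw [hfg]
    refine rep4_add_C hm0 ?_
    rcases eq_or_lt_of_le hrI.2 with hr1 | hr1
    · -- root at r = 1
      obtain ⟨k, hk⟩ := dvd_iff_isRoot.mpr (show g.IsRoot 1 by rwa [hr1] at hgr)
      have hgk : g = (1 - X) * (-k) := by rw [hk, C_1]; ring
      have hkne : (-k : Polynomial ℝ) ≠ 0 := by
        intro hz; rw [hgk, hz, mul_zero] at hg0; exact hg0 rfl
      have hdeg' : 1 + (-k : Polynomial ℝ).natDegree ≤ n := by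
        rw [hgk, natDegree_mul oneSubX_ne hkne, deg_oneSubX] at hgdeg
        exact hgdeg
      have hknn : ∀ t ∈ Icc (-1:ℝ) 1, 0 ≤ (-k : Polynomial ℝ).eval t := by
        refine nonneg_extend (r := 1) (by norm_num) ?_
        intro t ht htne
        have h1t : (0:ℝ) < 1 - t := by
          rcases lt_or_eq_of_le ht.2 with h | h
          · linarith
          · exact absurd h htne
        have hgt := hgnn t ht
        rw [hgk] at hgt
        simp only [eval_mul, eval_sub, eval_one, eval_X] at hgt
        nlinarith
      have hrep := rep4_mul_oneSubX
        (ih (-k : Polynomial ℝ).natDegree (by omega) _ le_rfl hknn)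
      rw [← hgk] at hrep
      exact rep4_mono (by omega) hrep
    rcases eq_or_lt_of_le hrI.1 with hrm1 | hrm1
    · -- root at r = -1
      obtain ⟨k, hk⟩ := dvd_iff_isRoot.mpr (show g.IsRoot (-1) by rwa [← hrm1] at hgr)
      have hgk : g = (1 + X) * k := by rw [hk, show (C (-1:ℝ)) = -1 by simp]; ring
      have hkne : k ≠ 0 := by
        intro hz; rw [hgk, hz, mul_zero] at hg0; exact hg0 rfl
      have hdeg' : 1 + k.natDegree ≤ n := by
        rw [hgk, natDegree_mul onePlusX_ne hkne, deg_onePlusX] at hgdeg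
        exact hgdeg
      have hknn : ∀ t ∈ Icc (-1:ℝ) 1, 0 ≤ k.eval t := by
        refine nonneg_extend (r := -1) (by norm_num) ?_
        intro t ht htne
        have h1t : (0:ℝ) < 1 + t := by
          rcases lt_or_eq_of_le ht.1 with h | h
          · linarith
          · exact absurd h.symm htne
        have hgt := hgnn t ht
        rw [hgk] at hgt
        simp only [eval_mul, eval_add, eval_one, eval_X] at hgt
        nlinarith
      have hrep := rep4_mul_onePlusX (ih k.natDegree (by omega) _ le_rfl hknn)
      rw [← hgk] at hrep
      exact rep4_mono (by omega) hrep
    · -- interior root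
      have hloc : IsLocalMin (fun t => g.eval t) r := by
        have hIcc : Icc (-1:ℝ) 1 ∈ nhds r := Icc_mem_nhds hrm1 hr1
        filter_upwards [hIcc] with x hx
        show g.eval r ≤ g.eval x
        rw [hgr]; exact hgnn x hx
      have hderiv : g.derivative.eval r = 0 := by
        have hz := hloc.deriv_eq_zero
        rwa [Polynomial.deriv] at hz
      obtain ⟨h, hk⟩ := sq_dvd_of_double_root hgr hderiv
      have hXr : (X - C r : Polynomial ℝ) ≠ 0 := X_sub_C_ne_zero r
      have hkne : h ≠ 0 := by
        intro hz; rw [hk, hz, mul_zero] at hg0; exact hg0 rfl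
      have hdeg' : 2 + h.natDegree ≤ n := by
        rw [hk, natDegree_mul (pow_ne_zero 2 hXr) hkne, natDegree_pow,
          natDegree_X_sub_C] at hgdeg
        omega
      have hknn : ∀ t ∈ Icc (-1:ℝ) 1, 0 ≤ h.eval t := by
        refine nonneg_extend (r := r) hrI ?_
        intro t ht htne
        have htr : t - r ≠ 0 := sub_ne_zero.mpr htne
        have h1t : (0:ℝ) < (t - r) ^ 2 := by positivity
        have hgt := hgnn t ht
        rw [hk] at hgt
        simp only [eval_mul, eval_pow, eval_sub, eval_C, eval_X] at hgt
        nlinarith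
      have hrep := rep4_mul_sq (X - C r) (le_of_eq (natDegree_X_sub_C r))
        (ih h.natDegree (by omega) _ le_rfl hknn)
      rw [← hk] at hrep
      exact rep4_mono (by omega) hrep

end Auxiliary

/-- Fekete–Lukács representation of univariate polynomials nonnegative on
`[-1,1]` (Theorem `thm::markov-felete-lucas`). -/
theorem fekete_lukacs (f : Polynomial ℝ) (d : ℕ) (hd : f.natDegree = d)
    (hf : ∀ t ∈ Icc (-1 : ℝ) 1, 0 ≤ f.eval t) :
    ∃ s₀ s₁ s₂ : Polynomial ℝ,
      IsSOS1 s₀ ∧ IsSOS1 s₁ ∧ IsSOS1 s₂ ∧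
      s₀.natDegree ≤ d + 1 ∧
      (s₁ * (1 - X)).natDegree ≤ d + 1 ∧
      (s₂ * (1 + X)).natDegree ≤ d + 1 ∧
      f = s₀ + s₁ * (1 - X) + s₂ * (1 + X) := by
  obtain ⟨s₀, s₁, s₂, s₃, h0, h1, h2, h3, d0, d1, d2, d3, e⟩ :=
    rep4_main d f (le_of_eq hd) hf
  have hhalf : (C (2⁻¹:ℝ)) * 2 = 1 := by
    rw [show (2 : Polynomial ℝ) = C 2 from (map_ofNat C 2).symm, ← C_mul]; norm_num
  refine ⟨s₀, s₁ + C 2⁻¹ * ((1 + X) ^ 2 * s₃), s₂ + C 2⁻¹ * ((1 - X) ^ 2 * s₃),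
    h0, h1.add (IsSOS1.C_mul (by norm_num) (h3.mul_sq _)),
    h2.add (IsSOS1.C_mul (by norm_num) (h3.mul_sq _)), d0.trans (Nat.le_succ d), ?_, ?_, ?_⟩
  · have e1 : (s₁ + C (2⁻¹:ℝ) * ((1 + X) ^ 2 * s₃)) * (1 - X) =
        s₁ * (1 - X) + C 2⁻¹ * ((s₃ * ((1 - X) * (1 + X))) * (1 + X)) := by ring
    rw [e1]
    refine le_trans (natDegree_add_le _ _) (max_le (d1.trans (Nat.le_succ d)) ?_)
    refine le_trans (natDegree_C_mul_le _ _) ?_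
    exact le_trans natDegree_mul_le (by rw [deg_onePlusX]; omega)
  · have e2 : (s₂ + C (2⁻¹:ℝ) * ((1 - X) ^ 2 * s₃)) * (1 + X) =
        s₂ * (1 + X) + C 2⁻¹ * ((s₃ * ((1 - X) * (1 + X))) * (1 - X)) := by ring
    rw [e2]
    refine le_trans (natDegree_add_le _ _) (max_le (d2.trans (Nat.le_succ d)) ?_)
    refine le_trans (natDegree_C_mul_le _ _) ?_
    exact le_trans natDegree_mul_le (by rw [deg_oneSubX]; omega)
  · linear_combination e - (s₃ * ((1 - X) * (1 + X))) * hhalf
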